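/- arXiv:math/0004001 — 2 statements merged into one kernel-verified Lean document; each statement's English description precedes it below -/
import Mathlib

section
/- For fixed complex parameters a, b, c, one has Γ(a+n)Γ(b+n)/(Γ(c+n)Γ(a+b-c+n)) = 1 + (c-a)(c-b)/(1+c-a-b-n) + O(n^{-2}) as n → ∞ through the positive integers. -/
open Complex Filter Asymptotics Finset Topology

lemma aux_prod_sub_one_le (x : ℕ → ℂ) (m : ℕ) :
    ‖∏ j ∈ range m, (1 + x j) - 1‖ ≤ ∏ j ∈ range m, (1 + ‖x j‖) - 1 := by
  induction m with
  | zero => simp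
  | succ m ih =>
    have hQ1 : (1:ℝ) ≤ ∏ j ∈ range m, (1 + ‖x j‖) := by
      have := Finset.prod_le_prod (s := range m) (f := fun _ => (1:ℝ))
        (g := fun j => 1 + ‖x j‖) (by intro i _; norm_num) (by intro i _; simp [norm_nonneg])
      simpa using this
    rw [prod_range_succ, prod_range_succ]
    calc ‖(∏ j ∈ range m, (1 + x j)) * (1 + x m) - 1‖
        = ‖(∏ j ∈ range m, (1 + x j) - 1) * (1 + x m) + x m‖ := by congr 1; ring
      _ ≤ ‖(∏ j ∈ range m, (1 + x j) - 1)‖ * ‖1 + x m‖ + ‖x m‖ := by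
          refine (norm_add_le _ _).trans ?_
          rw [norm_mul]
      _ ≤ (∏ j ∈ range m, (1 + ‖x j‖) - 1) * (1 + ‖x m‖) + ‖x m‖ := by
          gcongr
          exact (norm_add_le _ _).trans (by simp)
      _ = (∏ j ∈ range m, (1 + ‖x j‖)) * (1 + ‖x m‖) - 1 := by ring

lemma aux_prod_sub_sum_le (x : ℕ → ℂ) (m : ℕ) :
    ‖∏ j ∈ range m, (1 + x j) - 1 - ∑ j ∈ range m, x j‖ ≤
      ∏ j ∈ range m, (1 + ‖x j‖) - 1 - ∑ j ∈ range m, ‖x j‖ := by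
  induction m with
  | zero => simp
  | succ m ih =>
    rw [prod_range_succ, prod_range_succ, sum_range_succ, sum_range_succ]
    calc ‖(∏ j ∈ range m, (1 + x j)) * (1 + x m) - 1 -
            (∑ j ∈ range m, x j + x m)‖
        = ‖(∏ j ∈ range m, (1 + x j) - 1 - ∑ j ∈ range m, x j) +
            x m * (∏ j ∈ range m, (1 + x j) - 1)‖ := by congr 1; ring
      _ ≤ ‖∏ j ∈ range m, (1 + x j) - 1 - ∑ j ∈ range m, x j‖ +
            ‖x m‖ * ‖∏ j ∈ range m, (1 + x j) - 1‖ := by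
          refine (norm_add_le _ _).trans ?_
          rw [norm_mul]
      _ ≤ (∏ j ∈ range m, (1 + ‖x j‖) - 1 - ∑ j ∈ range m, ‖x j‖) +
            ‖x m‖ * (∏ j ∈ range m, (1 + ‖x j‖) - 1) := by
          gcongr
          exact aux_prod_sub_one_le x m
      _ = (∏ j ∈ range m, (1 + ‖x j‖)) * (1 + ‖x m‖) - 1 -
            (∑ j ∈ range m, ‖x j‖ + ‖x m‖) := by ring

lemma aux_prod_bound (x : ℕ → ℂ) (m : ℕ) (h : ∑ j ∈ range m, ‖x j‖ ≤ 1) :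
    ‖∏ j ∈ range m, (1 + x j) - 1 - ∑ j ∈ range m, x j‖ ≤
      (∑ j ∈ range m, ‖x j‖) ^ 2 := by
  set T := ∑ j ∈ range m, ‖x j‖ with hT
  have hT0 : 0 ≤ T := Finset.sum_nonneg fun i _ => norm_nonneg _
  have hQ : ∏ j ∈ range m, (1 + ‖x j‖) ≤ Real.exp T := by
    rw [hT, Real.exp_sum]
    exact Finset.prod_le_prod (fun i _ => by positivity)
      (fun i _ => by linarith [Real.add_one_le_exp ‖x i‖])
  have hexp : Real.exp T ≤ 1 + T + T ^ 2 := by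
    have h2 := Real.exp_bound' hT0 h (n := 2) (by norm_num)
    calc Real.exp T ≤ ∑ i ∈ range 2, T ^ i / (Nat.factorial i : ℝ) +
          T ^ 2 * (2 + 1) / ((Nat.factorial 2 : ℝ) * 2) := h2
      _ = 1 + T + T ^ 2 * 3 / 4 := by
          norm_num [Finset.sum_range_succ, Nat.factorial]
      _ ≤ 1 + T + T ^ 2 := by nlinarith
  have hmain := aux_prod_sub_sum_le x m
  rw [← hT] at hmain
  linarith

lemma aux_sum_inv_sq (n : ℕ) (hn : 2 ≤ n) (m : ℕ) :
    ∑ j ∈ range m, 1 / (((n:ℝ) + j) * ((n:ℝ) + j)) ≤ 2 / n := by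
  have hn1 : (1:ℝ) ≤ (n:ℝ) - 1 := by
    have : (2:ℝ) ≤ n := by exact_mod_cast hn
    linarith
  have key : ∀ m : ℕ, ∑ j ∈ range m, 1 / (((n:ℝ) + j) * ((n:ℝ) + j)) ≤
      1 / ((n:ℝ) - 1) - 1 / ((n:ℝ) - 1 + m) := by
    intro m
    induction m with
    | zero => simp
    | succ m ih =>
      rw [sum_range_succ]
      have h1 : (0:ℝ) < (n:ℝ) - 1 + m := by positivity
      have h2 : (0:ℝ) < (n:ℝ) + m := by positivity
      have h3 : 1 / (((n:ℝ) + m) * ((n:ℝ) + m)) ≤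
          1 / ((n:ℝ) - 1 + m) - 1 / ((n:ℝ) + m) := by
        rw [div_sub_div _ _ (ne_of_gt h1) (ne_of_gt h2)]
        rw [div_le_div_iff₀ (by positivity) (by positivity)]
        ring_nf
        nlinarith
      have : ((n:ℝ) - 1 + (m + 1 : ℕ)) = (n:ℝ) + m := by push_cast; ring
      rw [this]
      linarith
  have h4 : 1 / ((n:ℝ) - 1) ≤ 2 / n := by
    rw [div_le_div_iff₀ (by linarith) (by positivity)]
    have : (2:ℝ) ≤ n := by exact_mod_cast hn
    linarith
  calc ∑ j ∈ range m, 1 / (((n:ℝ) + j) * ((n:ℝ) + j))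
      ≤ 1 / ((n:ℝ) - 1) - 1 / ((n:ℝ) - 1 + m) := key m
    _ ≤ 1 / ((n:ℝ) - 1) := by
        have : (0:ℝ) < (n:ℝ) - 1 + m := by positivity
        have := one_div_pos.mpr this
        linarith
    _ ≤ 2 / n := h4

set_option maxHeartbeats 1000000 in
theorem gamma_ratio_first_order (a b c : ℂ) :
    (fun n : ℕ => Complex.Gamma (a + n) * Complex.Gamma (b + n) /
        (Complex.Gamma (c + n) * Complex.Gamma (a + b - c + n)) -
      (1 + (c - a) * (c - b) / (1 + c - a - b - n))) =O[atTop]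
      fun n : ℕ => (n : ℝ) ^ (-2 : ℤ) := by
  obtain ⟨d, hd⟩ : ∃ d, d = a + b - c := ⟨_, rfl⟩
  obtain ⟨D, hD⟩ : ∃ D, D = (c - a) * (c - b) := ⟨_, rfl⟩
  obtain ⟨t, ht⟩ : ∃ t, t = (a + b - 1) / 2 := ⟨_, rfl⟩
  obtain ⟨u, hu⟩ : ∃ u, u = a + b - c - 1 := ⟨_, rfl⟩
  obtain ⟨E, hE⟩ : ∃ E, E = t * (t + 1) - a * b := ⟨_, rfl⟩
  obtain ⟨R, hR⟩ : ∃ R : ℝ,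
      R = 4 * (‖a‖ + ‖b‖ + ‖c‖ + ‖d‖ + ‖t‖ + (‖t‖ + 1) + ‖u‖ + ‖D‖ + ‖E‖) + 10 := ⟨_, rfl⟩
  have hna := norm_nonneg a; have hnb := norm_nonneg b; have hnc := norm_nonneg c
  have hnd := norm_nonneg d; have hnt := norm_nonneg t; have hnu := norm_nonneg u
  have hnD := norm_nonneg D; have hnE := norm_nonneg E
  have hRpos : 0 < R := by rw [hR]; linarith
  have hRa : ‖a‖ ≤ R := by rw [hR]; linarith
  have hRb : ‖b‖ ≤ R := by rw [hR]; linarith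
  have hRc : ‖c‖ ≤ R := by rw [hR]; linarith
  have hRd : ‖d‖ ≤ R := by rw [hR]; linarith
  have hRt : ‖t‖ ≤ R := by rw [hR]; linarith
  have hRt1 : ‖t + 1‖ ≤ R := by
    have := norm_add_le t (1:ℂ)
    rw [hR]; simp only [norm_one] at this; linarith
  have hRu : ‖u‖ ≤ R := by rw [hR]; linarith
  have hRD4 : 4 * ‖D‖ ≤ R := by rw [hR]; linarith
  obtain ⟨M, hM⟩ := exists_nat_ge (2 * R)
  rw [isBigO_iff]
  refine ⟨64 * ‖D‖ ^ 2 + 32 * ‖D‖ * ‖E‖ + 4 * (‖D‖ * ‖t - u‖), ?_⟩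
  filter_upwards [eventually_ge_atTop M, eventually_ge_atTop 2] with n hnM hn2
  have hn2R : 2 * R ≤ (n : ℝ) := le_trans hM (by exact_mod_cast hnM)
  have hnR : (2:ℝ) ≤ (n:ℝ) := by exact_mod_cast hn2
  have hnpos : (0:ℝ) < n := by linarith
  -- lower bound on norms
  have hlow : ∀ z : ℂ, ‖z‖ ≤ R → ∀ j : ℕ, ((n:ℝ) + j) / 2 ≤ ‖z + n + j‖ := by
    intro z hz j
    have hnj : ‖((n:ℂ) + j)‖ = (n:ℝ) + j := by
      have h0 : ((n:ℂ) + j) = ((n + j : ℕ) : ℂ) := by push_cast; ring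
      rw [h0, Complex.norm_natCast]; push_cast; ring
    have h2 : ‖(↑n + ↑j : ℂ)‖ - ‖z‖ ≤ ‖z + ↑n + ↑j‖ := by
      have h3 := norm_sub_norm_le ((n:ℂ) + j) (-z)
      rw [norm_neg] at h3
      have h4 : ((n:ℂ) + j) - (-z) = z + ↑n + ↑j := by ring
      rwa [h4] at h3
    have hj : (0:ℝ) ≤ j := Nat.cast_nonneg j
    rw [hnj] at h2
    linarith
  have ha' : ∀ j : ℕ, ((n:ℝ) + j) / 2 ≤ ‖a + ↑n + ↑j‖ := hlow a hRa
  have hb' : ∀ j : ℕ, ((n:ℝ) + j) / 2 ≤ ‖b + ↑n + ↑j‖ := hlow b hRb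
  have ht' : ∀ j : ℕ, ((n:ℝ) + j) / 2 ≤ ‖t + ↑n + ↑j‖ := hlow t hRt
  have ht1' : ∀ j : ℕ, ((n:ℝ) + j) / 2 ≤ ‖t + ↑n + ↑j + 1‖ := by
    intro j
    have h5 := hlow (t + 1) hRt1 j
    have h6 : (t + 1) + (n:ℂ) + j = t + ↑n + ↑j + 1 := by ring
    rwa [h6] at h5
  have hjpos : ∀ j : ℕ, (0:ℝ) < ((n:ℝ) + j) / 2 := by
    intro j; have : (0:ℝ) ≤ j := Nat.cast_nonneg j; linarith
  have hane : ∀ j : ℕ, (a + ↑n + ↑j : ℂ) ≠ 0 := fun j =>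
    norm_pos_iff.mp (lt_of_lt_of_le (hjpos j) (ha' j))
  have hbne : ∀ j : ℕ, (b + ↑n + ↑j : ℂ) ≠ 0 := fun j =>
    norm_pos_iff.mp (lt_of_lt_of_le (hjpos j) (hb' j))
  have htne : ∀ j : ℕ, (t + ↑n + ↑j : ℂ) ≠ 0 := fun j =>
    norm_pos_iff.mp (lt_of_lt_of_le (hjpos j) (ht' j))
  have ht1ne : ∀ j : ℕ, (t + ↑n + ↑j + 1 : ℂ) ≠ 0 := fun j =>
    norm_pos_iff.mp (lt_of_lt_of_le (hjpos j) (ht1' j))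
  have htn' : (n:ℝ) / 2 ≤ ‖t + ↑n‖ := by have := ht' 0; simpa using this
  have hun' : (n:ℝ) / 2 ≤ ‖u + ↑n‖ := by have := hlow u hRu 0; simpa using this
  have htn0 : (t + (n:ℂ)) ≠ 0 := norm_pos_iff.mp (lt_of_lt_of_le (by linarith) htn')
  have hun0 : (u + (n:ℂ)) ≠ 0 := norm_pos_iff.mp (lt_of_lt_of_le (by linarith) hun')
  obtain ⟨x, hx⟩ : ∃ x : ℕ → ℂ, x = fun j : ℕ => -D / ((a + ↑n + ↑j) * (b + ↑n + ↑j)) := ⟨_, rfl⟩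
  -- norm of x j
  have hxnorm : ∀ j : ℕ, ‖x j‖ ≤ 4 * ‖D‖ * (1 / (((n:ℝ) + j) * ((n:ℝ) + j))) := by
    intro j
    rw [hx]
    calc ‖-D / ((a + ↑n + ↑j) * (b + ↑n + ↑j))‖
        = ‖D‖ / (‖a + ↑n + ↑j‖ * ‖b + ↑n + ↑j‖) := by
          rw [norm_div, norm_neg, norm_mul]
      _ ≤ ‖D‖ / ((((n:ℝ) + j) / 2) * (((n:ℝ) + j) / 2)) := by
          gcongr
          · exact ha' j
          · exact hb' j
      _ = 4 * ‖D‖ * (1 / (((n:ℝ) + j) * ((n:ℝ) + j))) := by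
          have := hjpos j
          field_simp
          ring
  have hTbound : ∀ m : ℕ, ∑ j ∈ range m, ‖x j‖ ≤ 8 * ‖D‖ / n := by
    intro m
    calc ∑ j ∈ range m, ‖x j‖
        ≤ ∑ j ∈ range m, 4 * ‖D‖ * (1 / (((n:ℝ) + j) * ((n:ℝ) + j))) :=
          Finset.sum_le_sum fun j _ => hxnorm j
      _ = 4 * ‖D‖ * ∑ j ∈ range m, 1 / (((n:ℝ) + j) * ((n:ℝ) + j)) := by
          rw [Finset.mul_sum]
      _ ≤ 4 * ‖D‖ * (2 / n) := by
          gcongr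
          exact aux_sum_inv_sq n hn2 m
      _ = 8 * ‖D‖ / n := by ring
  have hT1 : 8 * ‖D‖ / (n:ℝ) ≤ 1 := by
    rw [div_le_one hnpos]
    linarith
  have hbra1 : ∀ m : ℕ, ‖∏ j ∈ range m, (1 + x j) - 1 - ∑ j ∈ range m, x j‖ ≤
      64 * ‖D‖ ^ 2 / ((n:ℝ) * n) := by
    intro m
    have h1 := aux_prod_bound x m ((hTbound m).trans hT1)
    have h2 : (∑ j ∈ range m, ‖x j‖) ^ 2 ≤ (8 * ‖D‖ / n) ^ 2 := by
      have h0 : (0:ℝ) ≤ ∑ j ∈ range m, ‖x j‖ := Finset.sum_nonneg fun i _ => norm_nonneg _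
      exact pow_le_pow_left₀ h0 (hTbound m) 2
    have h3 : (8 * ‖D‖ / (n:ℝ)) ^ 2 = 64 * ‖D‖ ^ 2 / ((n:ℝ) * n) := by
      field_simp; ring
    linarith
  -- the corrected terms e j
  have hterm : ∀ j : ℕ, x j + (D / (t + ↑n + ↑j) - D / (t + ↑n + ↑j + 1)) =
      -(D * E) / ((a + ↑n + ↑j) * (b + ↑n + ↑j) * ((t + ↑n + ↑j) * (t + ↑n + ↑j + 1))) := by
    intro j
    have hW : (t + ↑n + ↑j) * (t + ↑n + ↑j + 1) ≠ 0 := mul_ne_zero (htne j) (ht1ne j)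
    have hAB : (a + ↑n + ↑j) * (b + ↑n + ↑j) ≠ 0 := mul_ne_zero (hane j) (hbne j)
    have hsplit : D / (t + ↑n + ↑j) - D / (t + ↑n + ↑j + 1) =
        D / ((t + ↑n + ↑j) * (t + ↑n + ↑j + 1)) := by
      rw [div_sub_div _ _ (htne j) (ht1ne j)]
      congr 1
      ring
    have hkey : (a + ↑n + ↑j) * (b + ↑n + ↑j) - (t + ↑n + ↑j) * (t + ↑n + ↑j + 1) = -E := by
      rw [hE, ht]; ring
    rw [hsplit, hx]
    simp only []
    rw [div_add_div _ _ hAB hW]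
    rw [div_eq_div_iff (mul_ne_zero hAB hW) (mul_ne_zero hAB hW)]
    linear_combination (D * ((a + ↑n + ↑j) * (b + ↑n + ↑j)) * ((t + ↑n + ↑j) * (t + ↑n + ↑j + 1))) * hkey
  have htermnorm : ∀ j : ℕ, ‖x j + (D / (t + ↑n + ↑j) - D / (t + ↑n + ↑j + 1))‖ ≤
      16 * ‖D‖ * ‖E‖ / ((n:ℝ) * n) * (1 / (((n:ℝ) + j) * ((n:ℝ) + j))) := by
    intro j
    rw [hterm j]
    have hj0 : (0:ℝ) ≤ j := Nat.cast_nonneg j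
    have hnn2 : (0:ℝ) < (n:ℝ) / 2 := by linarith
    calc ‖-(D * E) / ((a + ↑n + ↑j) * (b + ↑n + ↑j) * ((t + ↑n + ↑j) * (t + ↑n + ↑j + 1)))‖
        = ‖D‖ * ‖E‖ / (‖a + ↑n + ↑j‖ * ‖b + ↑n + ↑j‖ * (‖t + ↑n + ↑j‖ * ‖t + ↑n + ↑j + 1‖)) := by
          rw [norm_div, norm_neg, norm_mul, norm_mul, norm_mul, norm_mul]
      _ ≤ ‖D‖ * ‖E‖ / (((n:ℝ) / 2 * ((n:ℝ) / 2)) * ((((n:ℝ) + j) / 2) * (((n:ℝ) + j) / 2))) := by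
          refine div_le_div_of_nonneg_left (by positivity) (by positivity) ?_
          have h1 : (n:ℝ) / 2 ≤ ‖a + ↑n + ↑j‖ := le_trans (by linarith) (ha' j)
          have h2 : (n:ℝ) / 2 ≤ ‖b + ↑n + ↑j‖ := le_trans (by linarith) (hb' j)
          have h3 := ht' j
          have h4 := ht1' j
          have h5 := hjpos j
          exact mul_le_mul (mul_le_mul h1 h2 (by linarith) (norm_nonneg _))
            (mul_le_mul h3 h4 (by linarith) (norm_nonneg _)) (by positivity)
            (by positivity)
      _ = 16 * ‖D‖ * ‖E‖ / ((n:ℝ) * n) * (1 / (((n:ℝ) + j) * ((n:ℝ) + j))) := by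
          have := hjpos j
          field_simp
          ring
  have hbra2 : ∀ m : ℕ, ∑ j ∈ range m, ‖x j + (D / (t + ↑n + ↑j) - D / (t + ↑n + ↑j + 1))‖ ≤
      32 * ‖D‖ * ‖E‖ / ((n:ℝ) * n) := by
    intro m
    calc ∑ j ∈ range m, ‖x j + (D / (t + ↑n + ↑j) - D / (t + ↑n + ↑j + 1))‖
        ≤ ∑ j ∈ range m, 16 * ‖D‖ * ‖E‖ / ((n:ℝ) * n) * (1 / (((n:ℝ) + j) * ((n:ℝ) + j))) :=
          Finset.sum_le_sum fun j _ => htermnorm j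
      _ = 16 * ‖D‖ * ‖E‖ / ((n:ℝ) * n) * ∑ j ∈ range m, 1 / (((n:ℝ) + j) * ((n:ℝ) + j)) := by
          rw [Finset.mul_sum]
      _ ≤ 16 * ‖D‖ * ‖E‖ / ((n:ℝ) * n) * (2 / n) := by
          gcongr
          exact aux_sum_inv_sq n hn2 m
      _ = 32 * ‖D‖ * ‖E‖ / ((n:ℝ) * n * n) := by ring
      _ ≤ 32 * ‖D‖ * ‖E‖ / ((n:ℝ) * n) := by
          refine div_le_div_of_nonneg_left (by positivity) (by positivity) ?_
          have h1 : (1:ℝ) ≤ (n:ℝ) := by linarith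
          calc (n:ℝ) * n = (n:ℝ) * n * 1 := by ring
            _ ≤ (n:ℝ) * n * n := mul_le_mul_of_nonneg_left h1 (by positivity)
  -- telescoping sum
  have htel : ∀ N : ℕ, ∑ j ∈ range (N + 1), (D / (t + ↑n + ↑j) - D / (t + ↑n + ↑j + 1)) =
      D / (t + ↑n) - D / (t + ↑n + ↑(N + 1)) := by
    intro N
    have h := Finset.sum_range_sub' (f := fun i : ℕ => D / (t + ↑n + ↑i)) (N + 1)
    calc ∑ j ∈ range (N + 1), (D / (t + ↑n + ↑j) - D / (t + ↑n + ↑j + 1))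
        = ∑ j ∈ range (N + 1), (D / (t + ↑n + ↑j) - D / (t + ↑n + ↑(j + 1))) := by
          refine Finset.sum_congr rfl fun j _ => ?_
          push_cast
          ring
      _ = D / (t + ↑n + ↑(0:ℕ)) - D / (t + ↑n + ↑(N + 1)) := h
      _ = D / (t + ↑n) - D / (t + ↑n + ↑(N + 1)) := by norm_num
  -- difference of the two first-order terms
  have hbra4 : ‖D / (u + ↑n) - D / (t + ↑n)‖ ≤ 4 * (‖D‖ * ‖t - u‖) / ((n:ℝ) * n) := by
    have hid : D / (u + ↑n) - D / (t + ↑n) = D * (t - u) / ((u + ↑n) * (t + ↑n)) := by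
      rw [div_sub_div _ _ hun0 htn0]
      congr 1
      ring
    rw [hid]
    calc ‖D * (t - u) / ((u + ↑n) * (t + ↑n))‖
        = ‖D‖ * ‖t - u‖ / (‖u + ↑n‖ * ‖t + ↑n‖) := by rw [norm_div, norm_mul, norm_mul]
      _ ≤ ‖D‖ * ‖t - u‖ / (((n:ℝ) / 2) * ((n:ℝ) / 2)) := by
          refine div_le_div_of_nonneg_left (by positivity) (by positivity) ?_
          exact mul_le_mul hun' htn' (by linarith) (norm_nonneg _)
      _ = 4 * (‖D‖ * ‖t - u‖) / ((n:ℝ) * n) := by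
          field_simp
          ring
  -- real parts positive
  have hre : ∀ z : ℂ, ‖z‖ ≤ R → 0 < (z + n).re := by
    intro z hz
    have h1 : |z.re| ≤ ‖z‖ := Complex.abs_re_le_norm z
    simp only [Complex.add_re, Complex.natCast_re]
    have h2 : |z.re| ≤ R := le_trans h1 hz
    have h3 := abs_le.mp h2
    linarith [h3.1]
  have hGc0 : Complex.Gamma (c + ↑n) ≠ 0 := Complex.Gamma_ne_zero_of_re_pos (hre c hRc)
  have hGd0 : Complex.Gamma (d + ↑n) ≠ 0 := Complex.Gamma_ne_zero_of_re_pos (hre d hRd)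
  have htendG : Tendsto (fun N => Complex.GammaSeq (a + ↑n) N * Complex.GammaSeq (b + ↑n) N /
      (Complex.GammaSeq (c + ↑n) N * Complex.GammaSeq (d + ↑n) N)) atTop
      (𝓝 (Complex.Gamma (a + ↑n) * Complex.Gamma (b + ↑n) /
        (Complex.Gamma (c + ↑n) * Complex.Gamma (d + ↑n)))) :=
    ((Complex.GammaSeq_tendsto_Gamma _).mul (Complex.GammaSeq_tendsto_Gamma _)).div
      ((Complex.GammaSeq_tendsto_Gamma _).mul (Complex.GammaSeq_tendsto_Gamma _))
      (mul_ne_zero hGc0 hGd0)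
  -- the finite products
  have hprod_eq : ∀ N : ℕ, N ≠ 0 → Complex.GammaSeq (a + ↑n) N * Complex.GammaSeq (b + ↑n) N /
      (Complex.GammaSeq (c + ↑n) N * Complex.GammaSeq (d + ↑n) N) =
      ∏ j ∈ range (N + 1), (1 + x j) := by
    intro N hN
    have hN0 : (N : ℂ) ≠ 0 := Nat.cast_ne_zero.mpr hN
    have hcne : ∀ j : ℕ, (c + ↑n + ↑j : ℂ) ≠ 0 := fun j =>
      norm_pos_iff.mp (lt_of_lt_of_le (hjpos j) (hlow c hRc j))
    have hdne : ∀ j : ℕ, (d + ↑n + ↑j : ℂ) ≠ 0 := fun j =>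
      norm_pos_iff.mp (lt_of_lt_of_le (hjpos j) (hlow d hRd j))
    have hone : ∀ j : ℕ, (1 : ℂ) + x j =
        ((c + ↑n + ↑j) * (d + ↑n + ↑j)) / ((a + ↑n + ↑j) * (b + ↑n + ↑j)) := by
      intro j
      rw [hx]
      simp only []
      rw [eq_div_iff (mul_ne_zero (hane j) (hbne j)), add_mul,
        div_mul_cancel₀ _ (mul_ne_zero (hane j) (hbne j))]
      rw [hD, hd]
      ring
    rw [Finset.prod_congr rfl fun j _ => hone j, Finset.prod_div_distrib,
      Finset.prod_mul_distrib, Finset.prod_mul_distrib]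
    have hpow : (N:ℂ) ^ (a + ↑n) * (N:ℂ) ^ (b + ↑n) = (N:ℂ) ^ (c + ↑n) * (N:ℂ) ^ (d + ↑n) := by
      rw [← Complex.cpow_add _ _ hN0, ← Complex.cpow_add _ _ hN0]
      congr 1
      rw [hd]
      ring
    have hnum : (N:ℂ) ^ (a + ↑n) * (Nat.factorial N : ℂ) * ((N:ℂ) ^ (b + ↑n) * (Nat.factorial N : ℂ)) =
        (N:ℂ) ^ (c + ↑n) * (Nat.factorial N : ℂ) * ((N:ℂ) ^ (d + ↑n) * (Nat.factorial N : ℂ)) := by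
      linear_combination ((Nat.factorial N : ℂ) * (Nat.factorial N : ℂ)) * hpow
    have hZne : (N:ℂ) ^ (c + ↑n) * (Nat.factorial N : ℂ) * ((N:ℂ) ^ (d + ↑n) * (Nat.factorial N : ℂ)) ≠ 0 := by
      have hfne : (Nat.factorial N : ℂ) ≠ 0 := Nat.cast_ne_zero.mpr (Nat.factorial_ne_zero N)
      have hc1 : (N:ℂ) ^ (c + ↑n) ≠ 0 := by
        simp [Complex.cpow_eq_zero_iff, hN0]
      have hd1 : (N:ℂ) ^ (d + ↑n) ≠ 0 := by
        simp [Complex.cpow_eq_zero_iff, hN0]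
      exact mul_ne_zero (mul_ne_zero hc1 hfne) (mul_ne_zero hd1 hfne)
    unfold Complex.GammaSeq
    rw [div_mul_div_comm, div_mul_div_comm, div_div_div_comm, hnum, div_self hZne, one_div,
      inv_div]
  have htendP : Tendsto (fun N : ℕ => ∏ j ∈ range (N + 1), (1 + x j)) atTop
      (𝓝 (Complex.Gamma (a + ↑n) * Complex.Gamma (b + ↑n) /
        (Complex.Gamma (c + ↑n) * Complex.Gamma (d + ↑n)))) := by
    refine htendG.congr' ?_
    filter_upwards [eventually_ne_atTop 0] with N hN
    exact hprod_eq N hN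
  -- the per-N quantitative bound
  have hboundN : ∀ N : ℕ, ‖(∏ j ∈ range (N + 1), (1 + x j)) - (1 - D / (u + ↑n))‖ ≤
      (64 * ‖D‖ ^ 2 + 32 * ‖D‖ * ‖E‖ + 4 * (‖D‖ * ‖t - u‖)) / ((n:ℝ) * n) +
        2 * ‖D‖ / ((n:ℝ) + ((N:ℝ) + 1)) := by
    intro N
    have hsum_split : ∑ j ∈ range (N + 1), (x j + (D / (t + ↑n + ↑j) - D / (t + ↑n + ↑j + 1))) =
        ∑ j ∈ range (N + 1), x j + (D / (t + ↑n) - D / (t + ↑n + ↑(N + 1))) := by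
      rw [Finset.sum_add_distrib, htel N]
    have hdecomp : (∏ j ∈ range (N + 1), (1 + x j)) - (1 - D / (u + ↑n)) =
        ((∏ j ∈ range (N + 1), (1 + x j)) - 1 - ∑ j ∈ range (N + 1), x j) +
          (∑ j ∈ range (N + 1), (x j + (D / (t + ↑n + ↑j) - D / (t + ↑n + ↑j + 1)))) +
          (D / (u + ↑n) - D / (t + ↑n)) + D / (t + ↑n + ↑(N + 1)) := by
      rw [hsum_split]
      ring
    have hlast : ‖D / (t + ↑n + ↑(N + 1))‖ ≤ 2 * ‖D‖ / ((n:ℝ) + ((N:ℝ) + 1)) := by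
      rw [norm_div]
      have h1 := ht' (N + 1)
      have h2 := hjpos (N + 1)
      have h3 : ((n:ℝ) + ((N + 1 : ℕ) : ℝ)) = (n:ℝ) + ((N:ℝ) + 1) := by push_cast; ring
      rw [h3] at h1 h2
      calc ‖D‖ / ‖t + ↑n + ↑(N + 1)‖ ≤ ‖D‖ / (((n:ℝ) + ((N:ℝ) + 1)) / 2) :=
            div_le_div_of_nonneg_left hnD h2 h1
        _ = 2 * ‖D‖ / ((n:ℝ) + ((N:ℝ) + 1)) := by
            rw [div_div_eq_mul_div]
            ring
    have hB : ‖∑ j ∈ range (N + 1), (x j + (D / (t + ↑n + ↑j) - D / (t + ↑n + ↑j + 1)))‖ ≤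
        32 * ‖D‖ * ‖E‖ / ((n:ℝ) * n) :=
      le_trans (norm_sum_le _ _) (hbra2 (N + 1))
    rw [hdecomp]
    refine le_trans (norm_add_le _ _) ?_
    refine le_trans (add_le_add (norm_add_le _ _) le_rfl) ?_
    refine le_trans (add_le_add (add_le_add (norm_add_le _ _) le_rfl) le_rfl) ?_
    have hA := hbra1 (N + 1)
    have hC := hbra4
    have hsplit : (64 * ‖D‖ ^ 2 + 32 * ‖D‖ * ‖E‖ + 4 * (‖D‖ * ‖t - u‖)) / ((n:ℝ) * n) =
        64 * ‖D‖ ^ 2 / ((n:ℝ) * n) + 32 * ‖D‖ * ‖E‖ / ((n:ℝ) * n) +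
          4 * (‖D‖ * ‖t - u‖) / ((n:ℝ) * n) := by ring
    rw [hsplit]
    linarith [hA, hB, hC, hlast]
  -- tail tends to zero
  have hlimtail : Tendsto (fun N : ℕ => 2 * ‖D‖ / ((n:ℝ) + ((N:ℝ) + 1))) atTop (𝓝 0) := by
    apply Tendsto.div_atTop tendsto_const_nhds
    have h1 : Tendsto (fun N : ℕ => (N:ℝ)) atTop atTop := tendsto_natCast_atTop_atTop
    have h2 := tendsto_atTop_add_const_left atTop ((n:ℝ) + 1) h1
    exact h2.congr fun N => by ring
  have hlim1 : Tendsto (fun N : ℕ => ‖(∏ j ∈ range (N + 1), (1 + x j)) - (1 - D / (u + ↑n))‖)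
      atTop (𝓝 ‖Complex.Gamma (a + ↑n) * Complex.Gamma (b + ↑n) /
        (Complex.Gamma (c + ↑n) * Complex.Gamma (d + ↑n)) - (1 - D / (u + ↑n))‖) :=
    (htendP.sub tendsto_const_nhds).norm
  have hlim2 : Tendsto (fun N : ℕ =>
      (64 * ‖D‖ ^ 2 + 32 * ‖D‖ * ‖E‖ + 4 * (‖D‖ * ‖t - u‖)) / ((n:ℝ) * n) +
        2 * ‖D‖ / ((n:ℝ) + ((N:ℝ) + 1))) atTop
      (𝓝 ((64 * ‖D‖ ^ 2 + 32 * ‖D‖ * ‖E‖ + 4 * (‖D‖ * ‖t - u‖)) / ((n:ℝ) * n) + 0)) :=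
    tendsto_const_nhds.add hlimtail
  rw [add_zero] at hlim2
  have hfin : ‖Complex.Gamma (a + ↑n) * Complex.Gamma (b + ↑n) /
      (Complex.Gamma (c + ↑n) * Complex.Gamma (d + ↑n)) - (1 - D / (u + ↑n))‖ ≤
      (64 * ‖D‖ ^ 2 + 32 * ‖D‖ * ‖E‖ + 4 * (‖D‖ * ‖t - u‖)) / ((n:ℝ) * n) :=
    le_of_tendsto_of_tendsto' hlim1 hlim2 hboundN
  -- rewrite the goal
  have e1 : a + b - c + (n:ℂ) = d + ↑n := by rw [hd]
  have e2 : (1:ℂ) + (c - a) * (c - b) / (1 + c - a - b - ↑n) = 1 - D / (u + ↑n) := by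
    rw [← hD]
    have h5 : (1 + c - a - b - (n:ℂ)) = -(u + ↑n) := by rw [hu]; ring
    rw [h5, div_neg]
    ring
  have e3 : ‖((n:ℝ) ^ (-2:ℤ))‖ = ((n:ℝ) * n)⁻¹ := by
    rw [show (-2:ℤ) = -(2:ℤ) by norm_num, zpow_neg, Real.norm_eq_abs,
      _root_.abs_of_nonneg (by positivity)]
    congr 1
    rw [zpow_two]
  rw [e1, e2, e3]
  rw [div_eq_mul_inv] at hfin
  exact hfin
end

section
/- For every nonnegative integer M and fixed complex a, b, c, Γ(a+n)Γ(b+n)/(Γ(c+n)Γ(a+b-c+n)) = 1 + Σ_{m=1}^{M} (c-a)_m (c-b)_m / (m! · (1+c-a-b-n)_m) + O(n^{-M-1}) as n → ∞ through the positive integers. -/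
open Complex Filter Asymptotics Polynomial Topology

noncomputable def poch (x : ℂ) (m : ℕ) : ℂ := (ascPochhammer ℂ m).eval x

lemma poch_zero (x : ℂ) : poch x 0 = 1 := by simp [poch]

lemma poch_succ (x : ℂ) (m : ℕ) : poch x (m+1) = poch x m * (x + m) :=
  ascPochhammer_succ_eval m x

lemma poch_succ_left (x : ℂ) (m : ℕ) : poch x (m+1) = x * poch (x+1) m := by
  simp [poch, ascPochhammer_succ_left, eval_mul, eval_comp]

lemma poch_add (x : ℂ) (i j : ℕ) : poch x (i + j) = poch x i * poch (x + i) j := by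
  have := congrArg (Polynomial.eval x) (ascPochhammer_mul (S := ℂ) i j)
  simpa [poch, eval_mul, eval_comp] using this.symm

lemma poch_factorial (m k : ℕ) :
    (m.factorial : ℂ) * poch ((m : ℂ)+1) k = ((m+k).factorial : ℂ) := by
  have := factorial_mul_ascPochhammer ℂ m k
  simpa [poch] using this

lemma KI' (a b c N : ℂ) (M : ℕ) :
    ∑ m ∈ Finset.range (M+1),
      ((c-a)*(c-b) + m*(c+N)) * poch (c-a) m * poch (c-b) m *
        poch ((m:ℂ)+1) (M-m) * poch ((1+c-a-b-N) + m) (M-m)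
    = poch (c-a) (M+1) * poch (c-b) (M+1) := by
  induction M with
  | zero => simp [poch_zero, poch_succ]
  | succ M ih =>
    rw [Finset.sum_range_succ]
    have hterm : ∀ m ∈ Finset.range (M+1),
        ((c-a)*(c-b) + m*(c+N)) * poch (c-a) m * poch (c-b) m *
          poch ((m:ℂ)+1) (M+1-m) * poch ((1+c-a-b-N) + m) (M+1-m)
        = (((c-a)*(c-b) + m*(c+N)) * poch (c-a) m * poch (c-b) m *
            poch ((m:ℂ)+1) (M-m) * poch ((1+c-a-b-N) + m) (M-m)) *
          (((M:ℂ)+1) * ((1+c-a-b-N) + M)) := by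
      intro m hm
      have hmM : m ≤ M := Nat.lt_succ_iff.mp (Finset.mem_range.mp hm)
      have h1 : M + 1 - m = (M - m) + 1 := by omega
      have hc : ((M - m : ℕ) : ℂ) = (M:ℂ) - m := by
        push_cast [Nat.cast_sub hmM]; ring
      rw [h1, poch_succ, poch_succ, hc]
      ring
    rw [Finset.sum_congr rfl hterm, ← Finset.sum_mul, ih]
    simp only [Nat.sub_self, poch_zero]
    rw [poch_succ (c-a) (M+1), poch_succ (c-b) (M+1)]
    push_cast
    ring

lemma poch_ne_zero {x : ℂ} {m : ℕ} (h : ∀ j : ℕ, j < m → x + j ≠ 0) : poch x m ≠ 0 := by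
  induction m with
  | zero => simp [poch_zero]
  | succ k ih =>
    rw [poch_succ]
    exact mul_ne_zero (ih fun j hj => h j (by omega)) (h k (by omega))

lemma KI (a b c N : ℂ) (M : ℕ) (hX : ∀ j : ℕ, j < M → (1+c-a-b-N) + j ≠ 0) :
    ∑ m ∈ Finset.range (M+1), ((c-a)*(c-b) + m*(c+N)) *
        (poch (c-a) m * poch (c-b) m / (m.factorial * poch (1+c-a-b-N) m))
    = poch (c-a) (M+1) * poch (c-b) (M+1) / (M.factorial * poch (1+c-a-b-N) M) := by
  set X := 1+c-a-b-N with hXdef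
  have hXM : poch X M ≠ 0 := poch_ne_zero hX
  have hden : (M.factorial : ℂ) * poch X M ≠ 0 :=
    mul_ne_zero (Nat.cast_ne_zero.mpr M.factorial_ne_zero) hXM
  rw [eq_div_iff hden, Finset.sum_mul, ← KI' a b c N M]
  refine Finset.sum_congr rfl fun m hm => ?_
  have hmM : m ≤ M := Nat.lt_succ_iff.mp (Finset.mem_range.mp hm)
  have hXm : poch X m ≠ 0 := poch_ne_zero fun j hj => hX j (lt_of_lt_of_le hj hmM)
  have hmf : (m.factorial : ℂ) ≠ 0 := Nat.cast_ne_zero.mpr m.factorial_ne_zero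
  have hfac : (M.factorial : ℂ) = m.factorial * poch ((m:ℂ)+1) (M-m) := by
    rw [poch_factorial, Nat.add_sub_cancel' hmM]
  have hpX : poch X M = poch X m * poch (X + m) (M-m) := by
    rw [← poch_add]; congr 1; omega
  rw [hfac, hpX]
  field_simp
  ring

lemma poch_prod (s : ℂ) (n : ℕ) : poch s n = ∏ j ∈ Finset.range n, (s + j) := by
  induction n with
  | zero => simp [poch_zero]
  | succ k ih => rw [poch_succ, ih, Finset.prod_range_succ]

lemma re_pos_add_nat {z : ℂ} (hz : 0 < z.re) (k : ℕ) : z + (k:ℂ) ≠ 0 := by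
  intro h
  have : (z + (k:ℂ)).re = 0 := by rw [h]; simp
  simp only [Complex.add_re, Complex.natCast_re] at this
  have : (0:ℝ) < z.re + k := by positivity
  linarith

lemma Gamma_poch {z : ℂ} (hz : 0 < z.re) (n : ℕ) :
    Complex.Gamma (z + n) = poch z n * Complex.Gamma z := by
  induction n with
  | zero => simp [poch_zero]
  | succ k ih =>
    have h1 : z + ((k:ℕ)+1 : ℂ) = (z + k) + 1 := by ring
    have : Complex.Gamma (z + (k+1:ℕ)) = (z + k) * Complex.Gamma (z + k) := by
      push_cast
      rw [h1]
      exact Complex.Gamma_add_one _ (re_pos_add_nat hz k)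
    rw [this, ih, poch_succ]; ring

lemma tendsto_ratio_pos {a b c d : ℂ} (ha : 0 < a.re) (hb : 0 < b.re) (hc : 0 < c.re)
    (hd : 0 < d.re) (h : a + b = c + d) :
    Tendsto (fun n : ℕ => Complex.Gamma (a+n) * Complex.Gamma (b+n) /
      (Complex.Gamma (c+n) * Complex.Gamma (d+n))) atTop (𝓝 1) := by
  have hGa := Complex.Gamma_ne_zero_of_re_pos ha
  have hGb := Complex.Gamma_ne_zero_of_re_pos hb
  have hGc := Complex.Gamma_ne_zero_of_re_pos hc
  have hGd := Complex.Gamma_ne_zero_of_re_pos hd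
  rw [← tendsto_add_atTop_iff_nat 1]
  have hlim : Tendsto (fun n => Complex.GammaSeq c n * Complex.GammaSeq d n /
      (Complex.GammaSeq a n * Complex.GammaSeq b n) *
      (Complex.Gamma a * Complex.Gamma b / (Complex.Gamma c * Complex.Gamma d)))
      atTop (𝓝 1) := by
    have h2 := (((Complex.GammaSeq_tendsto_Gamma c).mul
      (Complex.GammaSeq_tendsto_Gamma d)).div ((Complex.GammaSeq_tendsto_Gamma a).mul
      (Complex.GammaSeq_tendsto_Gamma b)) (mul_ne_zero hGa hGb)).mul_const
      (Complex.Gamma a * Complex.Gamma b / (Complex.Gamma c * Complex.Gamma d))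
    have : Complex.Gamma c * Complex.Gamma d / (Complex.Gamma a * Complex.Gamma b) *
        (Complex.Gamma a * Complex.Gamma b / (Complex.Gamma c * Complex.Gamma d)) = 1 := by
      field_simp
    rw [← this]
    exact h2.congr fun k => by simp [Pi.div_apply]
  refine hlim.congr' ?_
  filter_upwards [eventually_ge_atTop 1] with n hn
  have hn0 : (n:ℂ) ≠ 0 := Nat.cast_ne_zero.mpr (by omega)
  have hF : ((n.factorial : ℕ):ℂ) ≠ 0 := Nat.cast_ne_zero.mpr n.factorial_ne_zero
  have hGS : ∀ s : ℂ, Complex.GammaSeq s n = (n:ℂ)^s * n.factorial / poch s (n+1) := by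
    intro s
    rw [Complex.GammaSeq, poch_prod]
  have hP : ∀ z : ℂ, 0 < z.re → poch z (n+1) ≠ 0 := fun z hz =>
    poch_ne_zero fun j _ => re_pos_add_nat hz j
  have hpow : (n:ℂ)^a * (n:ℂ)^b = (n:ℂ)^c * (n:ℂ)^d := by
    rw [← Complex.cpow_add _ _ hn0, ← Complex.cpow_add _ _ hn0, h]
  have hcp : ∀ s : ℂ, (n:ℂ)^s ≠ 0 := fun s hs =>
    hn0 ((Complex.cpow_eq_zero_iff _ _).1 hs).1
  rw [Gamma_poch ha (n+1), Gamma_poch hb (n+1), Gamma_poch hc (n+1), Gamma_poch hd (n+1),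
    hGS a, hGS b, hGS c, hGS d]
  field_simp [hP a ha, hP b hb, hP c hc, hP d hd]
  rw [div_eq_iff (by
    exact mul_ne_zero (hcp a) (hcp b))]
  linear_combination (-1:ℂ) * hpow


lemma tendsto_ratio (a b c d : ℂ) (h : a + b = c + d) :
    Tendsto (fun n : ℕ => Complex.Gamma (a+n) * Complex.Gamma (b+n) /
      (Complex.Gamma (c+n) * Complex.Gamma (d+n))) atTop (𝓝 1) := by
  obtain ⟨K, hK⟩ : ∃ K : ℕ, |a.re| + |b.re| + |c.re| + |d.re| < K := exists_nat_gt _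
  have hpos : ∀ z : ℂ, |z.re| ≤ |a.re| + |b.re| + |c.re| + |d.re| → 0 < (z + (K:ℂ)).re := by
    intro z hz
    simp only [Complex.add_re, Complex.natCast_re]
    have h1 : -|z.re| ≤ z.re := neg_abs_le _
    linarith
  have ha : 0 < (a + (K:ℂ)).re := hpos a (by
    have := abs_nonneg b.re; have := abs_nonneg c.re; have := abs_nonneg d.re; linarith)
  have hb : 0 < (b + (K:ℂ)).re := hpos b (by
    have := abs_nonneg a.re; have := abs_nonneg c.re; have := abs_nonneg d.re; linarith)
  have hc : 0 < (c + (K:ℂ)).re := hpos c (by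
    have := abs_nonneg a.re; have := abs_nonneg b.re; have := abs_nonneg d.re; linarith)
  have hd : 0 < (d + (K:ℂ)).re := hpos d (by
    have := abs_nonneg a.re; have := abs_nonneg b.re; have := abs_nonneg c.re; linarith)
  have h' : (a + K) + (b + K) = (c + K) + (d + K) := by
    rw [show (a+K)+(b+K) = (a+b) + 2*K by ring, show (c+K)+(d+K) = (c+d)+2*K by ring, h]
  have := tendsto_ratio_pos ha hb hc hd h'
  rw [← tendsto_add_atTop_iff_nat K]
  refine this.congr fun n => ?_
  have e : ∀ z : ℂ, (z + (K:ℂ)) + (n:ℂ) = z + ((n + K : ℕ):ℂ) := by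
    intro z; push_cast; ring
  rw [e a, e b, e c, e d]

lemma poch_pred (X : ℂ) (m : ℕ) (h2 : X - 1 + m ≠ 0) :
    poch (X - 1) m = (X - 1) * poch X m / (X - 1 + m) := by
  rw [eq_div_iff h2]
  have e2 := poch_succ_left (X-1) m
  rw [poch_succ (X-1) m, sub_add_cancel] at e2
  exact e2

lemma poch_norm_le (z : ℂ) (m : ℕ) : ‖poch z m‖ ≤ (‖z‖ + m)^m := by
  induction m with
  | zero => simp [poch_zero]
  | succ k ih =>
    rw [poch_succ, norm_mul]
    have hzk : (0:ℝ) ≤ ‖z‖ + k := by positivity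
    have h1 : ‖z + (k:ℂ)‖ ≤ ‖z‖ + (k+1:ℕ) := by
      calc ‖z + (k:ℂ)‖ ≤ ‖z‖ + ‖(k:ℂ)‖ := norm_add_le _ _
        _ ≤ ‖z‖ + ((k:ℝ)+1) := by rw [Complex.norm_natCast]; linarith
        _ = ‖z‖ + ((k+1:ℕ):ℝ) := by push_cast; ring
    have h2 : ‖poch z k‖ ≤ (‖z‖ + (k+1:ℕ))^k := by
      refine ih.trans (pow_le_pow_left₀ hzk ?_ k)
      push_cast; linarith
    calc ‖poch z k‖ * ‖z + (k:ℂ)‖ ≤ (‖z‖ + (k+1:ℕ))^k * (‖z‖ + (k+1:ℕ)) :=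
          mul_le_mul h2 h1 (norm_nonneg _) (by positivity)
      _ = (‖z‖ + (k+1:ℕ))^(k+1) := by rw [pow_succ]

lemma poch_norm_ge (z : ℂ) (m : ℕ) (r : ℝ) (hr : 0 ≤ r)
    (h : ∀ j : ℕ, j < m → r ≤ ‖z + j‖) : r^m ≤ ‖poch z m‖ := by
  induction m with
  | zero => simp [poch_zero]
  | succ k ih =>
    rw [poch_succ, norm_mul, pow_succ]
    exact mul_le_mul (ih fun j hj => h j (by omega)) (h k (by omega))
      (by positivity) (norm_nonneg _)

lemma one_sub_sum_le_prod (s : Finset ℕ) (u : ℕ → ℝ) (h0 : ∀ j ∈ s, 0 ≤ u j)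
    (h1 : ∀ j ∈ s, u j ≤ 1) : 1 - ∑ j ∈ s, u j ≤ ∏ j ∈ s, (1 - u j) := by
  induction s using Finset.cons_induction with
  | empty => simp
  | cons a s ha ih =>
    rw [Finset.prod_cons, Finset.sum_cons]
    have hP : 1 - ∑ j ∈ s, u j ≤ ∏ j ∈ s, (1 - u j) :=
      ih (fun j hj => h0 j (Finset.mem_cons_of_mem hj))
        (fun j hj => h1 j (Finset.mem_cons_of_mem hj))
    have hs0 : 0 ≤ ∑ j ∈ s, u j := Finset.sum_nonneg fun j hj => h0 j (Finset.mem_cons_of_mem hj)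
    have hua : 0 ≤ u a := h0 a (Finset.mem_cons_self a s)
    have hua1 : u a ≤ 1 := h1 a (Finset.mem_cons_self a s)
    nlinarith [hP, hs0, hua, hua1]

lemma sum_Ico_inv_sq_le (n k : ℕ) (hn : 2 ≤ n) :
    ∑ j ∈ Finset.Ico n k, (1:ℝ)/(j:ℝ)^2 ≤ 2/(n:ℝ) := by
  have hn1 : (2:ℝ) ≤ (n:ℝ) := by exact_mod_cast hn
  have hsub : Finset.Ico n k ⊆ Finset.Ioc (n-1) (max k n) := by
    intro j hj
    simp only [Finset.mem_Ico] at hj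
    simp only [Finset.mem_Ioc]
    exact ⟨by omega, le_trans hj.2.le (le_max_left _ _)⟩
  have h1 : ∑ j ∈ Finset.Ico n k, (1:ℝ)/(j:ℝ)^2 ≤
      ∑ j ∈ Finset.Ioc (n-1) (max k n), ((j:ℝ)^2)⁻¹ := by
    simp only [one_div]
    exact Finset.sum_le_sum_of_subset_of_nonneg hsub (fun j _ _ => by positivity)
  have h2 := sum_Ioc_inv_sq_le_sub (α := ℝ) (k := n-1) (n := max k n) (by omega) (by omega)
  have hc : ((n-1 : ℕ):ℝ) = (n:ℝ) - 1 := by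
    have : 1 ≤ n := by omega
    push_cast [this]; ring
  have h3 : ((n-1:ℕ):ℝ)⁻¹ - ((max k n : ℕ):ℝ)⁻¹ ≤ 2/(n:ℝ) := by
    have hpos : (0:ℝ) ≤ ((max k n : ℕ):ℝ)⁻¹ := by positivity
    have h4 : ((n:ℝ)-1)⁻¹ ≤ 2/(n:ℝ) := by
      rw [inv_eq_one_div, div_le_div_iff₀ (by linarith) (by linarith)]
      linarith
    rw [hc]; linarith
  exact h1.trans (h2.trans h3)

lemma scalar_step (q A cn e mu F Pm Pab : ℂ) (hq : q - A = cn * e) (hF : F ≠ 0)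
    (hPm : Pm ≠ 0) (he : e ≠ 0) (hcn : cn ≠ 0) (hmu : -e + mu ≠ 0) :
    Pab / (F * (-e * Pm / (-e + mu)))
    = (q / (cn * e)) * (Pab / (F * Pm)) - (A + mu * cn) * (Pab / (F * Pm)) / (cn * e) := by
  field_simp
  linear_combination (-Pab) * hq

lemma S_step (a b c : ℂ) (M n : ℕ)
    (hX : ∀ j : ℕ, j < M + 1 → (1+c-a-b-(n:ℂ)) + j ≠ 0)
    (hXm : ∀ m : ℕ, m ≤ M → (1+c-a-b-(n:ℂ)) - 1 + m ≠ 0)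
    (hcn : c + (n:ℂ) ≠ 0) (hdn : a+b-c+(n:ℂ) ≠ 0) :
    ∑ m ∈ Finset.range (M+1), poch (c-a) m * poch (c-b) m /
        (m.factorial * poch (1+c-a-b-((n+1:ℕ):ℂ)) m)
    = ((a+n)*(b+n)/((c+n)*(a+b-c+n))) * ∑ m ∈ Finset.range (M+1),
        poch (c-a) m * poch (c-b) m / (m.factorial * poch (1+c-a-b-(n:ℂ)) m)
      - poch (c-a) (M+1) * poch (c-b) (M+1) /
        (M.factorial * poch (1+c-a-b-(n:ℂ)) M * ((c+n)*(a+b-c+n))) := by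
  have hX1 : (1+c-a-b-((n+1:ℕ):ℂ)) = (1+c-a-b-(n:ℂ)) - 1 := by push_cast; ring
  have hstep : ∀ m ∈ Finset.range (M+1),
      poch (c-a) m * poch (c-b) m / (m.factorial * poch (1+c-a-b-((n+1:ℕ):ℂ)) m)
      = ((a+n)*(b+n)/((c+n)*(a+b-c+n))) *
          (poch (c-a) m * poch (c-b) m / (m.factorial * poch (1+c-a-b-(n:ℂ)) m))
        - ((c-a)*(c-b) + m*(c+n)) *
          (poch (c-a) m * poch (c-b) m / (m.factorial * poch (1+c-a-b-(n:ℂ)) m)) /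
          ((c+n)*(a+b-c+n)) := by
    intro m hm
    have hmM : m ≤ M := Nat.lt_succ_iff.mp (Finset.mem_range.mp hm)
    have hXmne : (1+c-a-b-(n:ℂ)) - 1 + m ≠ 0 := hXm m hmM
    have hPm : poch (1+c-a-b-(n:ℂ)) m ≠ 0 :=
      poch_ne_zero fun j hj => hX j (by omega)
    have hmf : (m.factorial : ℂ) ≠ 0 := Nat.cast_ne_zero.mpr m.factorial_ne_zero
    have hXe : (1+c-a-b-(n:ℂ)) - 1 = -(a+b-c+(n:ℂ)) := by ring
    rw [hX1, poch_pred _ m hXmne, hXe]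
    rw [hXe] at hXmne
    exact scalar_step ((a+n)*(b+n)) ((c-a)*(c-b)) (c+n) (a+b-c+n) (m:ℂ) _ _ _
      (by ring) hmf hPm hdn hcn hXmne
  rw [Finset.sum_congr rfl hstep, Finset.sum_sub_distrib, ← Finset.mul_sum]
  congr 1
  rw [← Finset.sum_div, KI a b c (n:ℂ) M (fun j hj => hX j (by omega)), div_div]

lemma telescope (D r E : ℕ → ℂ) (N : ℕ)
    (hrec : ∀ n, N ≤ n → D (n+1) = r n * D n + E n)
    (hrne : ∀ n, N ≤ n → r n ≠ 0)
    (hPne : ∀ n k, N ≤ n → (∏ j ∈ Finset.Ico n k, r j) ≠ 0) :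
    ∀ n k, N ≤ n → n ≤ k →
      D n = D k / (∏ j ∈ Finset.Ico n k, r j)
            - ∑ j ∈ Finset.Ico n k, E j / (∏ i ∈ Finset.Ico n (j+1), r i) := by
  intro n k hn hk
  induction k, hk using Nat.le_induction with
  | base => simp
  | succ k hk ih =>
    rw [Finset.prod_Ico_succ_top (by omega), Finset.sum_Ico_succ_top (by omega),
      hrec k (by omega)]
    rw [ih]
    have hP : (∏ j ∈ Finset.Ico n k, r j) ≠ 0 := hPne n k hn
    have hr : r k ≠ 0 := hrne k (by omega)
    rw [Finset.prod_Ico_succ_top (by omega)]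
    field_simp
    ring

lemma final_est (D r E : ℕ → ℂ) (N M' : ℕ) (CE CA : ℝ) (hCE : 0 ≤ CE) (hCA : 0 ≤ CA)
    (hN2 : 2 ≤ N) (hNA : 4*CA ≤ (N:ℝ))
    (hrec : ∀ n, N ≤ n → D (n+1) = r n * D n + E n)
    (hr1 : ∀ n : ℕ, N ≤ n → ‖r n - 1‖ ≤ CA/(n:ℝ)^2)
    (hE : ∀ n : ℕ, N ≤ n → ‖E n‖ ≤ CE/(n:ℝ)^(M'+2))
    (hD0 : Tendsto D atTop (𝓝 0)) :
    ∀ n : ℕ, N ≤ n → ‖D n‖ ≤ (4*CE)/(n:ℝ)^(M'+1) := by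
  have hjpos : ∀ j : ℕ, N ≤ j → (0:ℝ) < j := fun j hj => by
    have : (2:ℝ) ≤ (j:ℝ) := by exact_mod_cast le_trans hN2 hj
    linarith
  have hu1 : ∀ j : ℕ, N ≤ j → CA/(j:ℝ)^2 ≤ 1/2 := by
    intro j hj
    have hjp := hjpos j hj
    have hNj : (N:ℝ) ≤ j := by exact_mod_cast hj
    have h2j : (2:ℝ) ≤ j := by exact_mod_cast le_trans hN2 hj
    rw [div_le_iff₀ (by positivity)]
    nlinarith [sq_nonneg ((j:ℝ) - 2)]
  have hrlow : ∀ j : ℕ, N ≤ j → 1 - CA/(j:ℝ)^2 ≤ ‖r j‖ := by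
    intro j hj
    have h1 : (1:ℝ) ≤ ‖r j - 1‖ + ‖r j‖ := by
      have := norm_sub_le (r j - 1) (r j)
      simpa using this
    have := hr1 j hj
    linarith
  have hrne : ∀ j : ℕ, N ≤ j → r j ≠ 0 := by
    intro j hj h0
    have h1 := hrlow j hj
    have h2 := hu1 j hj
    rw [h0, norm_zero] at h1
    linarith
  have hprod : ∀ n k : ℕ, N ≤ n → 1/2 ≤ ‖∏ j ∈ Finset.Ico n k, r j‖ := by
    intro n k hn
    have hnp := hjpos n hn
    have hNn : (N:ℝ) ≤ n := by exact_mod_cast hn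
    have hsum : ∑ j ∈ Finset.Ico n k, CA/(j:ℝ)^2 ≤ 1/2 := by
      have h1 : ∑ j ∈ Finset.Ico n k, CA/(j:ℝ)^2 = CA * ∑ j ∈ Finset.Ico n k, 1/(j:ℝ)^2 := by
        rw [Finset.mul_sum]; exact Finset.sum_congr rfl fun j _ => by ring
      rw [h1]
      have h2 := sum_Ico_inv_sq_le n k (by omega)
      have h3 : CA * ∑ j ∈ Finset.Ico n k, 1/(j:ℝ)^2 ≤ CA * (2/(n:ℝ)) :=
        mul_le_mul_of_nonneg_left h2 hCA
      have h4 : CA * (2/(n:ℝ)) ≤ 1/2 := by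
        rw [mul_div_assoc', div_le_div_iff₀ (by positivity) (by norm_num)]
        nlinarith
      linarith
    calc (1:ℝ)/2 ≤ 1 - ∑ j ∈ Finset.Ico n k, CA/(j:ℝ)^2 := by linarith
      _ ≤ ∏ j ∈ Finset.Ico n k, (1 - CA/(j:ℝ)^2) := by
          apply one_sub_sum_le_prod
          · intro j hj; positivity
          · intro j hj
            have hjN : N ≤ j := le_trans hn (Finset.mem_Ico.mp hj).1
            have := hu1 j hjN
            linarith
      _ ≤ ∏ j ∈ Finset.Ico n k, ‖r j‖ := by
          apply Finset.prod_le_prod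
          · intro j hj
            have hjN : N ≤ j := le_trans hn (Finset.mem_Ico.mp hj).1
            have := hu1 j hjN; linarith
          · intro j hj
            exact hrlow j (le_trans hn (Finset.mem_Ico.mp hj).1)
      _ = ‖∏ j ∈ Finset.Ico n k, r j‖ := (norm_prod _ _).symm
  have hPne : ∀ n k : ℕ, N ≤ n → (∏ j ∈ Finset.Ico n k, r j) ≠ 0 := by
    intro n k hn h0
    have := hprod n k hn
    rw [h0, norm_zero] at this
    linarith
  have htel := telescope D r E N hrec hrne hPne
  intro n hn
  have hnp := hjpos n hn
  have hEsum : ∀ k : ℕ, ∑ j ∈ Finset.Ico n k, ‖E j‖ ≤ 2*CE/(n:ℝ)^(M'+1) := by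
    intro k
    have h1 : ∀ j ∈ Finset.Ico n k, ‖E j‖ ≤ (CE/(n:ℝ)^M') * (1/(j:ℝ)^2) := by
      intro j hj
      have hjN : N ≤ j := le_trans hn (Finset.mem_Ico.mp hj).1
      have hjp := hjpos j hjN
      have hnj : (n:ℝ) ≤ (j:ℝ) := by exact_mod_cast (Finset.mem_Ico.mp hj).1
      refine (hE j hjN).trans ?_
      rw [div_mul_div_comm, mul_one]
      apply div_le_div_of_nonneg_left hCE (by positivity)
      calc (n:ℝ)^M' * (j:ℝ)^2 ≤ (j:ℝ)^M' * (j:ℝ)^2 := by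
            apply mul_le_mul_of_nonneg_right (pow_le_pow_left₀ (by positivity) hnj M') (by positivity)
        _ = (j:ℝ)^(M'+2) := by rw [← pow_add]
    calc ∑ j ∈ Finset.Ico n k, ‖E j‖ ≤ ∑ j ∈ Finset.Ico n k, (CE/(n:ℝ)^M') * (1/(j:ℝ)^2) :=
          Finset.sum_le_sum h1
      _ = (CE/(n:ℝ)^M') * ∑ j ∈ Finset.Ico n k, 1/(j:ℝ)^2 := by rw [Finset.mul_sum]
      _ ≤ (CE/(n:ℝ)^M') * (2/(n:ℝ)) := by
          apply mul_le_mul_of_nonneg_left (sum_Ico_inv_sq_le n k (by omega)) (by positivity)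
      _ = 2*CE/(n:ℝ)^(M'+1) := by rw [pow_succ]; field_simp
  have hb : ∀ k : ℕ, n ≤ k → ‖D n‖ ≤ 2*‖D k‖ + (4*CE)/(n:ℝ)^(M'+1) := by
    intro k hk
    rw [htel n k hn hk]
    have h1 : ‖D k / (∏ j ∈ Finset.Ico n k, r j)‖ ≤ 2*‖D k‖ := by
      rw [norm_div]
      rw [div_le_iff₀ (lt_of_lt_of_le (by norm_num) (hprod n k hn))]
      have := hprod n k hn
      nlinarith [norm_nonneg (D k)]
    have h2 : ‖∑ j ∈ Finset.Ico n k, E j / (∏ i ∈ Finset.Ico n (j+1), r i)‖ ≤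
        2 * ∑ j ∈ Finset.Ico n k, ‖E j‖ := by
      calc ‖∑ j ∈ Finset.Ico n k, E j / (∏ i ∈ Finset.Ico n (j+1), r i)‖ ≤
          ∑ j ∈ Finset.Ico n k, ‖E j / (∏ i ∈ Finset.Ico n (j+1), r i)‖ := norm_sum_le _ _
        _ ≤ ∑ j ∈ Finset.Ico n k, 2*‖E j‖ := by
            apply Finset.sum_le_sum
            intro j hj
            rw [norm_div, div_le_iff₀ (lt_of_lt_of_le (by norm_num) (hprod n (j+1) hn))]
            have := hprod n (j+1) hn
            nlinarith [norm_nonneg (E j)]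
        _ = 2 * ∑ j ∈ Finset.Ico n k, ‖E j‖ := by rw [Finset.mul_sum]
    calc ‖D k / (∏ j ∈ Finset.Ico n k, r j) -
          ∑ j ∈ Finset.Ico n k, E j / (∏ i ∈ Finset.Ico n (j+1), r i)‖ ≤
        ‖D k / (∏ j ∈ Finset.Ico n k, r j)‖ +
          ‖∑ j ∈ Finset.Ico n k, E j / (∏ i ∈ Finset.Ico n (j+1), r i)‖ := norm_sub_le _ _
      _ ≤ 2*‖D k‖ + 2 * ∑ j ∈ Finset.Ico n k, ‖E j‖ := add_le_add h1 h2
      _ ≤ 2*‖D k‖ + 2 * (2*CE/(n:ℝ)^(M'+1)) := by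
          have := hEsum k
          linarith
      _ = 2*‖D k‖ + (4*CE)/(n:ℝ)^(M'+1) := by ring
  have hlim : Tendsto (fun k => 2*‖D k‖ + (4*CE)/(n:ℝ)^(M'+1)) atTop
      (𝓝 (2*‖(0:ℂ)‖ + (4*CE)/(n:ℝ)^(M'+1))) :=
    ((hD0.norm.const_mul 2).add_const _)
  have hlim' : Tendsto (fun k => 2*‖D k‖ + (4*CE)/(n:ℝ)^(M'+1)) atTop
      (𝓝 ((4*CE)/(n:ℝ)^(M'+1))) := by
    have : 2*‖(0:ℂ)‖ + (4*CE)/(n:ℝ)^(M'+1) = (4*CE)/(n:ℝ)^(M'+1) := by simp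
    rwa [this] at hlim
  exact ge_of_tendsto hlim' (Filter.eventually_atTop.mpr ⟨n, hb⟩)


lemma div4 (x y z w p q u v : ℂ) :
    (x*p)*(y*q)/((z*u)*(w*v)) = (x*y/(z*w))*((p*q)/(u*v)) := by
  ring

set_option maxHeartbeats 1000000 in
theorem gamma_ratio_asymptotic_expansion (a b c : ℂ) (M : ℕ) :
    (fun n : ℕ => Complex.Gamma (a + n) * Complex.Gamma (b + n) /
        (Complex.Gamma (c + n) * Complex.Gamma (a + b - c + n)) -
      (1 + ∑ m ∈ Finset.Icc 1 M,
        poch (c - a) m * poch (c - b) m /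
          ((m.factorial : ℂ) * poch (1 + c - a - b - n) m))) =O[atTop]
      fun n : ℕ => (n : ℝ) ^ (-(M : ℤ) - 1) := by
  classical
  set t : ℕ → ℕ → ℂ := fun m n => poch (c-a) m * poch (c-b) m /
      ((m.factorial : ℂ) * poch (1+c-a-b-(n:ℂ)) m) with htdef
  set S : ℕ → ℂ := fun n => ∑ m ∈ Finset.range (M+1), t m n with hSdef
  set f : ℕ → ℂ := fun n => Complex.Gamma (a+n) * Complex.Gamma (b+n) /
      (Complex.Gamma (c+n) * Complex.Gamma (a+b-c+n)) with hfdef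
  set r : ℕ → ℂ := fun n => ((a+n)*(b+n))/((c+n)*(a+b-c+n)) with hrdef
  set E : ℕ → ℂ := fun n => poch (c-a) (M+1) * poch (c-b) (M+1) /
      ((M.factorial:ℂ) * poch (1+c-a-b-(n:ℂ)) M * ((c+n)*(a+b-c+n))) with hEdef
  set D : ℕ → ℂ := fun n => f n - S n with hDdef
  set B : ℝ := ‖a‖ + ‖b‖ + ‖c‖ + (M:ℝ) + 2 with hBdef
  have hB0 : 0 ≤ B := by rw [hBdef]; positivity
  set CA : ℝ := 4 * ‖(c-a)*(c-b)‖ with hCAdef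
  have hCA0 : 0 ≤ CA := by rw [hCAdef]; positivity
  set CE : ℝ := ‖poch (c-a) (M+1)‖ * ‖poch (c-b) (M+1)‖ * 2^(M+2) with hCEdef
  have hCE0 : 0 ≤ CE := by rw [hCEdef]; positivity
  obtain ⟨N, hNgt⟩ : ∃ N : ℕ, 2*B + 4*CA + 4 < N := exists_nat_gt _
  have hN2 : 2 ≤ N := by
    have h1 : (2:ℝ) ≤ (N:ℝ) := by linarith
    exact_mod_cast h1
  have hNA : 4*CA ≤ (N:ℝ) := by linarith
  -- basic norm bounds
  have hza : ‖a‖ ≤ B := by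
    rw [hBdef]
    have := norm_nonneg b; have := norm_nonneg c; have : (0:ℝ) ≤ (M:ℝ) := Nat.cast_nonneg M
    linarith [norm_nonneg b, norm_nonneg c]
  have hzb : ‖b‖ ≤ B := by
    rw [hBdef]
    linarith [norm_nonneg a, norm_nonneg c, Nat.cast_nonneg (α := ℝ) M]
  have hzc : ‖c‖ ≤ B := by
    rw [hBdef]
    linarith [norm_nonneg a, norm_nonneg b, Nat.cast_nonneg (α := ℝ) M]
  have habc0 : ‖a+b-c‖ ≤ ‖a‖ + ‖b‖ + ‖c‖ := by
    calc ‖a+b-c‖ ≤ ‖a+b‖ + ‖c‖ := norm_sub_le _ _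
      _ ≤ ‖a‖ + ‖b‖ + ‖c‖ := by linarith [norm_add_le a b]
  have habc : ‖a+b-c‖ ≤ B := by
    rw [hBdef]; linarith [Nat.cast_nonneg (α := ℝ) M]
  have hXz : ∀ j : ℕ, (j:ℝ) ≤ (M:ℝ)+1 → ‖a+b-c-1-(j:ℂ)‖ ≤ B := by
    intro j hj
    have h1 : ‖a+b-c-1-(j:ℂ)‖ ≤ ‖a+b-c-1‖ + (j:ℝ) := by
      calc ‖a+b-c-1-(j:ℂ)‖ ≤ ‖a+b-c-1‖ + ‖(j:ℂ)‖ := norm_sub_le _ _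
        _ = ‖a+b-c-1‖ + (j:ℝ) := by rw [Complex.norm_natCast]
    have h2 : ‖a+b-c-1‖ ≤ ‖a+b-c‖ + 1 := by
      calc ‖a+b-c-1‖ ≤ ‖a+b-c‖ + ‖(1:ℂ)‖ := norm_sub_le _ _
        _ = ‖a+b-c‖ + 1 := by rw [norm_one]
    rw [hBdef]; linarith
  have hXz2 : ∀ m : ℕ, (m:ℝ) ≤ (M:ℝ) → ‖a+b-c-(m:ℂ)‖ ≤ B := by
    intro m hm
    have h1 : ‖a+b-c-(m:ℂ)‖ ≤ ‖a+b-c‖ + (m:ℝ) := by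
      calc ‖a+b-c-(m:ℂ)‖ ≤ ‖a+b-c‖ + ‖(m:ℂ)‖ := norm_sub_le _ _
        _ = ‖a+b-c‖ + (m:ℝ) := by rw [Complex.norm_natCast]
    rw [hBdef]; linarith
  have hlow : ∀ n : ℕ, N ≤ n → ∀ z : ℂ, ‖z‖ ≤ B → (n:ℝ)/2 ≤ ‖z + (n:ℂ)‖ := by
    intro n hn z hz
    have hNn : (N:ℝ) ≤ (n:ℝ) := by exact_mod_cast hn
    have h1 : ‖(n:ℂ)‖ ≤ ‖z + (n:ℂ)‖ + ‖z‖ := by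
      calc ‖(n:ℂ)‖ = ‖(z + (n:ℂ)) - z‖ := by rw [add_sub_cancel_left]
        _ ≤ ‖z + (n:ℂ)‖ + ‖z‖ := norm_sub_le _ _
    rw [Complex.norm_natCast] at h1
    linarith
  have hnhalfpos : ∀ n : ℕ, N ≤ n → (0:ℝ) < (n:ℝ)/2 := by
    intro n hn
    have : (2:ℝ) ≤ (n:ℝ) := by exact_mod_cast le_trans hN2 hn
    linarith
  have hnz : ∀ n : ℕ, N ≤ n → ∀ w : ℂ, (n:ℝ)/2 ≤ ‖w‖ → w ≠ 0 := by
    intro n hn w hw h0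
    rw [h0, norm_zero] at hw
    linarith [hnhalfpos n hn]
  -- per-n facts
  have hXlow : ∀ n : ℕ, N ≤ n → ∀ j : ℕ, j ≤ M → (n:ℝ)/2 ≤ ‖(1+c-a-b-(n:ℂ)) + j‖ := by
    intro n hn j hj
    have e : (1+c-a-b-(n:ℂ)) + j = -((a+b-c-1-(j:ℂ)) + n) := by push_cast; ring
    rw [e, norm_neg]
    refine hlow n hn _ (hXz j ?_)
    have : (j:ℝ) ≤ (M:ℝ) := by exact_mod_cast hj
    linarith
  have hXne : ∀ n : ℕ, N ≤ n → ∀ j : ℕ, j < M+1 → (1+c-a-b-(n:ℂ)) + j ≠ 0 := by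
    intro n hn j hj
    exact hnz n hn _ (hXlow n hn j (by omega))
  have hXmlow : ∀ n : ℕ, N ≤ n → ∀ m : ℕ, m ≤ M → (n:ℝ)/2 ≤ ‖(1+c-a-b-(n:ℂ)) - 1 + m‖ := by
    intro n hn m hm
    have e : (1+c-a-b-(n:ℂ)) - 1 + m = -((a+b-c-(m:ℂ)) + n) := by push_cast; ring
    rw [e, norm_neg]
    refine hlow n hn _ (hXz2 m ?_)
    exact_mod_cast hm
  have hXmne : ∀ n : ℕ, N ≤ n → ∀ m : ℕ, m ≤ M → (1+c-a-b-(n:ℂ)) - 1 + m ≠ 0 := by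
    intro n hn m hm
    exact hnz n hn _ (hXmlow n hn m hm)
  have halow : ∀ n : ℕ, N ≤ n → (n:ℝ)/2 ≤ ‖a + (n:ℂ)‖ := fun n hn => hlow n hn a hza
  have hblow : ∀ n : ℕ, N ≤ n → (n:ℝ)/2 ≤ ‖b + (n:ℂ)‖ := fun n hn => hlow n hn b hzb
  have hclow : ∀ n : ℕ, N ≤ n → (n:ℝ)/2 ≤ ‖c + (n:ℂ)‖ := fun n hn => hlow n hn c hzc
  have hdlow : ∀ n : ℕ, N ≤ n → (n:ℝ)/2 ≤ ‖(a+b-c) + (n:ℂ)‖ := fun n hn => hlow n hn _ habc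
  have hane : ∀ n : ℕ, N ≤ n → a + (n:ℂ) ≠ 0 := fun n hn => hnz n hn _ (halow n hn)
  have hbne : ∀ n : ℕ, N ≤ n → b + (n:ℂ) ≠ 0 := fun n hn => hnz n hn _ (hblow n hn)
  have hcne : ∀ n : ℕ, N ≤ n → c + (n:ℂ) ≠ 0 := fun n hn => hnz n hn _ (hclow n hn)
  have hdne : ∀ n : ℕ, N ≤ n → a+b-c + (n:ℂ) ≠ 0 := fun n hn => hnz n hn _ (hdlow n hn)
  -- recurrence
  have hrec : ∀ n : ℕ, N ≤ n → D (n+1) = r n * D n + E n := by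
    intro n hn
    have hfstep : f (n+1) = r n * f n := by
      have ga : Complex.Gamma (a + ((n+1:ℕ):ℂ)) = (a+(n:ℂ)) * Complex.Gamma (a+(n:ℂ)) := by
        rw [show a + ((n+1:ℕ):ℂ) = (a+(n:ℂ))+1 by push_cast; ring,
          Complex.Gamma_add_one _ (hane n hn)]
      have gb : Complex.Gamma (b + ((n+1:ℕ):ℂ)) = (b+(n:ℂ)) * Complex.Gamma (b+(n:ℂ)) := by
        rw [show b + ((n+1:ℕ):ℂ) = (b+(n:ℂ))+1 by push_cast; ring,
          Complex.Gamma_add_one _ (hbne n hn)]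
      have gc : Complex.Gamma (c + ((n+1:ℕ):ℂ)) = (c+(n:ℂ)) * Complex.Gamma (c+(n:ℂ)) := by
        rw [show c + ((n+1:ℕ):ℂ) = (c+(n:ℂ))+1 by push_cast; ring,
          Complex.Gamma_add_one _ (hcne n hn)]
      have gd : Complex.Gamma (a+b-c + ((n+1:ℕ):ℂ)) =
          (a+b-c+(n:ℂ)) * Complex.Gamma (a+b-c+(n:ℂ)) := by
        rw [show a+b-c + ((n+1:ℕ):ℂ) = (a+b-c+(n:ℂ))+1 by push_cast; ring,
          Complex.Gamma_add_one _ (hdne n hn)]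
      show Complex.Gamma (a+((n+1:ℕ):ℂ)) * Complex.Gamma (b+((n+1:ℕ):ℂ)) /
          (Complex.Gamma (c+((n+1:ℕ):ℂ)) * Complex.Gamma (a+b-c+((n+1:ℕ):ℂ)))
        = ((a+(n:ℂ))*(b+(n:ℂ)))/((c+(n:ℂ))*(a+b-c+(n:ℂ))) *
          (Complex.Gamma (a+(n:ℂ)) * Complex.Gamma (b+(n:ℂ)) /
            (Complex.Gamma (c+(n:ℂ)) * Complex.Gamma (a+b-c+(n:ℂ))))
      rw [ga, gb, gc, gd]
      exact div4 _ _ _ _ _ _ _ _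
    have hsstep : S (n+1) = r n * S n - E n := by
      show ∑ m ∈ Finset.range (M+1), t m (n+1) = _
      have := S_step a b c M n (hXne n hn) (hXmne n hn) (hcne n hn) (hdne n hn)
      exact this
    show f (n+1) - S (n+1) = r n * (f n - S n) + E n
    rw [hfstep, hsstep]
    ring
  -- bound on r - 1
  have hr1 : ∀ n : ℕ, N ≤ n → ‖r n - 1‖ ≤ CA/(n:ℝ)^2 := by
    intro n hn
    have hnp := hnhalfpos n hn
    have hprod_ne : (c+(n:ℂ))*(a+b-c+(n:ℂ)) ≠ 0 := mul_ne_zero (hcne n hn) (hdne n hn)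
    have hid : r n - 1 = ((c-a)*(c-b))/((c+(n:ℂ))*(a+b-c+(n:ℂ))) := by
      show ((a+(n:ℂ))*(b+(n:ℂ)))/((c+(n:ℂ))*(a+b-c+(n:ℂ))) - 1 = _
      rw [div_sub_one hprod_ne]
      congr 1
      ring
    rw [hid]
    simp only [norm_div, norm_mul]
    have h1 : (n:ℝ)^2/4 ≤ ‖c+(n:ℂ)‖ * ‖a+b-c+(n:ℂ)‖ := by
      have := mul_le_mul (hclow n hn) (hdlow n hn) (le_of_lt hnp) (norm_nonneg _)
      calc (n:ℝ)^2/4 = ((n:ℝ)/2)*((n:ℝ)/2) := by ring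
        _ ≤ _ := this
    have hn2pos : (0:ℝ) < (n:ℝ)^2/4 := by nlinarith
    calc ‖c-a‖ * ‖c-b‖ / (‖c+(n:ℂ)‖ * ‖a+b-c+(n:ℂ)‖) ≤ ‖c-a‖ * ‖c-b‖ / ((n:ℝ)^2/4) :=
          div_le_div_of_nonneg_left (by positivity) hn2pos h1
      _ = CA/(n:ℝ)^2 := by rw [hCAdef, norm_mul, div_div_eq_mul_div]; ring
  -- bound on E
  have hEbnd : ∀ n : ℕ, N ≤ n → ‖E n‖ ≤ CE/(n:ℝ)^(M+2) := by
    intro n hn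
    have hnp := hnhalfpos n hn
    show ‖poch (c-a) (M+1) * poch (c-b) (M+1) /
      ((M.factorial:ℂ) * poch (1+c-a-b-(n:ℂ)) M * ((c+(n:ℂ))*(a+b-c+(n:ℂ))))‖ ≤ _
    simp only [norm_div, norm_mul]
    have hfac1 : (1:ℝ) ≤ ‖((M.factorial:ℕ):ℂ)‖ := by
      rw [Complex.norm_natCast]
      exact_mod_cast Nat.one_le_iff_ne_zero.mpr M.factorial_ne_zero
    have hpoch : ((n:ℝ)/2)^M ≤ ‖poch (1+c-a-b-(n:ℂ)) M‖ :=
      poch_norm_ge _ M _ (le_of_lt hnp) (fun j hj => hXlow n hn j (by omega))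
    have hcd : ((n:ℝ)/2)*((n:ℝ)/2) ≤ ‖c+(n:ℂ)‖ * ‖a+b-c+(n:ℂ)‖ :=
      mul_le_mul (hclow n hn) (hdlow n hn) (le_of_lt hnp) (norm_nonneg _)
    have hden : ((n:ℝ)/2)^(M+2) ≤
        ‖((M.factorial:ℕ):ℂ)‖ * ‖poch (1+c-a-b-(n:ℂ)) M‖ * (‖c+(n:ℂ)‖ * ‖a+b-c+(n:ℂ)‖) := by
      have h2 : ((n:ℝ)/2)^(M+2) = ((n:ℝ)/2)^M * (((n:ℝ)/2)*((n:ℝ)/2)) := by ring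
      rw [h2]
      calc ((n:ℝ)/2)^M * (((n:ℝ)/2)*((n:ℝ)/2))
          ≤ ‖poch (1+c-a-b-(n:ℂ)) M‖ * (‖c+(n:ℂ)‖ * ‖a+b-c+(n:ℂ)‖) :=
            mul_le_mul hpoch hcd (by positivity) (norm_nonneg _)
        _ ≤ ‖((M.factorial:ℕ):ℂ)‖ * ‖poch (1+c-a-b-(n:ℂ)) M‖ *
              (‖c+(n:ℂ)‖ * ‖a+b-c+(n:ℂ)‖) := by
            rw [mul_assoc]
            exact le_mul_of_one_le_left (by positivity) hfac1
    have hhalfpos : (0:ℝ) < ((n:ℝ)/2)^(M+2) := pow_pos hnp _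
    calc ‖poch (c-a) (M+1)‖ * ‖poch (c-b) (M+1)‖ /
          (‖((M.factorial:ℕ):ℂ)‖ * ‖poch (1+c-a-b-(n:ℂ)) M‖ * (‖c+(n:ℂ)‖ * ‖a+b-c+(n:ℂ)‖))
        ≤ ‖poch (c-a) (M+1)‖ * ‖poch (c-b) (M+1)‖ / (((n:ℝ)/2)^(M+2)) :=
          div_le_div_of_nonneg_left (by positivity) hhalfpos hden
      _ = CE/(n:ℝ)^(M+2) := by
          rw [hCEdef, div_pow, div_div_eq_mul_div]
  -- limits
  have hf1 : Tendsto f atTop (𝓝 1) := tendsto_ratio a b c (a+b-c) (by ring)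
  have hS1 : Tendsto S atTop (𝓝 1) := by
    have hterm : ∀ m ∈ Finset.range (M+1),
        Tendsto (fun n => t m n) atTop (𝓝 (if m = 0 then (1:ℂ) else 0)) := by
      intro m hm
      by_cases hm0 : m = 0
      · subst hm0
        simp only [if_pos rfl]
        have : ∀ n : ℕ, t 0 n = 1 := by
          intro n
          show poch (c-a) 0 * poch (c-b) 0 / ((Nat.factorial 0 : ℂ) * poch (1+c-a-b-(n:ℂ)) 0) = 1
          simp [poch_zero]
        simp only [this]
        exact tendsto_const_nhds
      · rw [if_neg hm0]
        refine squeeze_zero_norm' (a := fun n : ℕ =>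
          (‖poch (c-a) m‖ * ‖poch (c-b) m‖ * 2^m)/(n:ℝ)) ?_ ?_
        · filter_upwards [eventually_ge_atTop N] with n hn
          have hnp := hnhalfpos n hn
          have hn1 : (1:ℝ) ≤ (n:ℝ) := by
            have : (2:ℝ) ≤ (n:ℝ) := by exact_mod_cast le_trans hN2 hn
            linarith
          have hmM : m ≤ M := Nat.lt_succ_iff.mp (Finset.mem_range.mp hm)
          show ‖poch (c-a) m * poch (c-b) m /
            ((m.factorial:ℂ) * poch (1+c-a-b-(n:ℂ)) m)‖ ≤ _
          simp only [norm_div, norm_mul]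
          have hfac1 : (1:ℝ) ≤ ‖((m.factorial:ℕ):ℂ)‖ := by
            rw [Complex.norm_natCast]
            exact_mod_cast Nat.one_le_iff_ne_zero.mpr m.factorial_ne_zero
          have hpoch : ((n:ℝ)/2)^m ≤ ‖poch (1+c-a-b-(n:ℂ)) m‖ :=
            poch_norm_ge _ m _ (le_of_lt hnp) (fun j hj => hXlow n hn j (by omega))
          have hden : ((n:ℝ)/2)^m ≤ ‖((m.factorial:ℕ):ℂ)‖ * ‖poch (1+c-a-b-(n:ℂ)) m‖ :=
            hpoch.trans (le_mul_of_one_le_left (norm_nonneg _) hfac1)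
          have hp1 : (n:ℝ) ≤ (n:ℝ)^m := le_self_pow₀ hn1 hm0
          calc ‖poch (c-a) m‖ * ‖poch (c-b) m‖ /
                (‖((m.factorial:ℕ):ℂ)‖ * ‖poch (1+c-a-b-(n:ℂ)) m‖)
              ≤ ‖poch (c-a) m‖ * ‖poch (c-b) m‖ / (((n:ℝ)/2)^m) :=
                div_le_div_of_nonneg_left (by positivity) (pow_pos hnp m) hden
            _ = ‖poch (c-a) m‖ * ‖poch (c-b) m‖ * 2^m / (n:ℝ)^m := by
                rw [div_pow, div_div_eq_mul_div]
            _ ≤ ‖poch (c-a) m‖ * ‖poch (c-b) m‖ * 2^m / (n:ℝ) := by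
                apply div_le_div_of_nonneg_left (by positivity) (by linarith) hp1
        · exact tendsto_const_div_atTop_nhds_zero_nat _
    have hsum := tendsto_finset_sum (Finset.range (M+1)) hterm
    have hval : ∑ m ∈ Finset.range (M+1), (if m = 0 then (1:ℂ) else 0) = 1 := by
      rw [Finset.sum_ite_eq' (Finset.range (M+1)) 0 (fun _ => (1:ℂ))]
      simp
    rw [hval] at hsum
    exact hsum
  have hD0 : Tendsto D atTop (𝓝 0) := by
    have := hf1.sub hS1
    simpa using this
  -- conclusion
  have hmain := final_est D r E N M CE CA hCE0 hCA0 hN2 hNA hrec hr1 hEbnd hD0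
  rw [Asymptotics.isBigO_iff]
  refine ⟨4*CE, ?_⟩
  filter_upwards [eventually_ge_atTop N] with n hn
  have hn1 : (1:ℝ) ≤ (n:ℝ) := by
    have : (2:ℝ) ≤ (n:ℝ) := by exact_mod_cast le_trans hN2 hn
    linarith
  have heq : (1:ℂ) + ∑ m ∈ Finset.Icc 1 M,
      poch (c - a) m * poch (c - b) m /
        ((m.factorial : ℂ) * poch (1 + c - a - b - (n:ℂ)) m) = S n := by
    show _ = ∑ m ∈ Finset.range (M+1), t m n
    have hins : Finset.range (M+1) = insert 0 (Finset.Icc 1 M) := by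
      ext x
      simp only [Finset.mem_range, Finset.mem_insert, Finset.mem_Icc]
      omega
    rw [hins, Finset.sum_insert (by simp)]
    have ht0 : t 0 n = 1 := by
      show poch (c-a) 0 * poch (c-b) 0 / ((Nat.factorial 0 : ℂ) * poch (1+c-a-b-(n:ℂ)) 0) = 1
      simp [poch_zero]
    rw [ht0]
  have hnorm : ‖(n:ℝ)^(-(M:ℤ)-1)‖ = ((n:ℝ)^(M+1))⁻¹ := by
    rw [show -(M:ℤ)-1 = -((M+1:ℕ):ℤ) by push_cast; ring, zpow_neg, zpow_natCast]
    rw [Real.norm_of_nonneg (by positivity)]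
  calc ‖Complex.Gamma (a + n) * Complex.Gamma (b + n) /
        (Complex.Gamma (c + n) * Complex.Gamma (a + b - c + n)) -
      (1 + ∑ m ∈ Finset.Icc 1 M,
        poch (c - a) m * poch (c - b) m /
          ((m.factorial : ℂ) * poch (1 + c - a - b - (n:ℂ)) m))‖
      = ‖D n‖ := by rw [heq]
    _ ≤ (4*CE)/(n:ℝ)^(M+1) := hmain n hn
    _ = 4*CE * ‖(n:ℝ)^(-(M:ℤ)-1)‖ := by
        rw [hnorm, div_eq_mul_inv]
end
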